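/- Let W ⊆ ℝ^n be a linear subspace with W ≠ {0} such that every circuit of W has at least two elements. Then (1/n)·χ̄_W ≤ κ_W ≤ √(χ̄_W² − 1), where χ̄_W = max{‖L_I^W‖ : ∅ ≠ I ⊆ {1,…,n}} and ‖L_I^W‖ is the ℓ₂→ℓ₂ operator norm of the lifting map on π_I(W). -/

import Mathlib

open scoped BigOperators

variable {ι : Type*} [Fintype ι] [DecidableEq ι]

/-- The ℓ₁ norm of a vector. -/
noncomputable def norm1 (x : ι → ℝ) : ℝ := ∑ i, |x i|

/-- The ℓ∞ norm of a vector. -/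
noncomputable def normInf (x : ι → ℝ) : ℝ := ⨆ i, |x i|

/-- The ℓ₂ norm of a vector. -/
noncomputable def norm2 (x : ι → ℝ) : ℝ := Real.sqrt (∑ i, (x i) ^ 2)

/-- The componentwise negative part `max (-x) 0`. -/
noncomputable def vneg (x : ι → ℝ) : ι → ℝ := fun i => max (-(x i)) 0

/-- The componentwise positive part `max x 0`. -/
noncomputable def vpos (x : ι → ℝ) : ι → ℝ := fun i => max (x i) 0

/-- `y` is sign-consistent with `x`. -/
def SignConsistent (y x : ι → ℝ) : Prop :=
  (∀ i, 0 ≤ x i * y i) ∧ ∀ i, x i = 0 → y i = 0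

/-- The subspace `ℝ^n_C` of vectors supported on `C`. -/
def coordSubspace (C : Set ι) : Submodule ℝ (ι → ℝ) where
  carrier := {x | ∀ i ∉ C, x i = 0}
  zero_mem' := by intro i _; rfl
  add_mem' := by intro a b ha hb i hi; simp [ha i hi, hb i hi]
  smul_mem' := by intro c a ha i hi; simp [ha i hi]

/-- `C` is a circuit of the subspace `W`: `W ∩ ℝ^n_C` is one-dimensional and no
strict subset of `C` has this property. -/
def IsCircuit (W : Submodule ℝ (ι → ℝ)) (C : Set ι) : Prop :=
  Module.finrank ℝ ↥(W ⊓ coordSubspace C) = 1 ∧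
  ∀ C' : Set ι, C' ⊂ C → Module.finrank ℝ ↥(W ⊓ coordSubspace C') ≠ 1

/-- The circuit imbalance measure `κ_W`. -/
noncomputable def kappa (W : Submodule ℝ (ι → ℝ)) : ℝ :=
  sSup ({1} ∪ {r | ∃ C : Set ι, IsCircuit W C ∧ ∃ g ∈ W, g ≠ 0 ∧ {i | g i ≠ 0} = C ∧
    r = sSup ((fun i => |g i|) '' C) / sInf ((fun i => |g i|) '' C)})

/-- The matroidal closure of `K` with respect to `W`. -/
def clos (W : Submodule ℝ (ι → ℝ)) (K : Set ι) : Set ι :=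
  K ∪ {j | j ∉ K ∧ ∃ C : Set ι, IsCircuit W C ∧ j ∈ C ∧ C ⊆ K ∪ {j}}

/-- `z` is the minimum-norm lift `L_I^W(p)` of `p` to `W`:
`z ∈ W`, `z` agrees with `p` on `I`, and `z` has minimum ℓ₂-norm among such vectors. -/
def IsMinLift (W : Submodule ℝ (ι → ℝ)) (I : Finset ι) (p z : ι → ℝ) : Prop :=
  z ∈ W ∧ (∀ i ∈ I, z i = p i) ∧
  ∀ z' ∈ W, (∀ i ∈ I, z' i = p i) → norm2 z ≤ norm2 z'

/-- The ℓ₂→ℓ₂ operator norm of the lifting map `L_I^W` on `π_I(W)`. -/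
noncomputable def liftOpNorm (W : Submodule ℝ (ι → ℝ)) (I : Finset ι) : ℝ :=
  sSup {r | ∃ p z, IsMinLift W I p z ∧ r = norm2 z / Real.sqrt (∑ i ∈ I, (p i) ^ 2)}

/-- The condition number `χ̄_W = max{‖L_I^W‖ : ∅ ≠ I}`. -/
noncomputable def chiBar (W : Submodule ℝ (ι → ℝ)) : ℝ :=
  sSup {r | ∃ I : Finset ι, I.Nonempty ∧ r = liftOpNorm W I}

/-- The orthogonal complement of `W` in `ℝ^n`. -/
def orthComp (W : Submodule ℝ (ι → ℝ)) : Submodule ℝ (ι → ℝ) where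
  carrier := {y | ∀ x ∈ W, ∑ i, x i * y i = 0}
  zero_mem' := by intro x hx; simp
  add_mem' := by
    intro a b ha hb x hx
    simpa [mul_add, Finset.sum_add_distrib, ha x hx] using hb x hx
  smul_mem' := by
    intro c a ha x hx
    have h := ha x hx
    have : ∑ i, x i * (c • a) i = c * ∑ i, x i * a i := by
      rw [Finset.mul_sum]
      refine Finset.sum_congr rfl fun i _ => ?_
      simp [Pi.smul_apply, smul_eq_mul]; ring
    simpa [this, h]

/-- `x` is a feasible solution to the primal program of Primal-Dual(W,d,c). -/
def PrimalFeasible (W : Submodule ℝ (ι → ℝ)) (d x : ι → ℝ) : Prop :=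
  x - d ∈ W ∧ ∀ i, 0 ≤ x i

/-- `s` is a feasible solution to the dual program of Primal-Dual(W,d,c). -/
def DualFeasible (W : Submodule ℝ (ι → ℝ)) (c s : ι → ℝ) : Prop :=
  s - c ∈ orthComp W ∧ ∀ i, 0 ≤ s i

/-- `(x,s)` is an optimal solution to Primal-Dual(W,d,c): both feasible and `⟨x,s⟩ = 0`. -/
def IsOptimalPair (W : Submodule ℝ (ι → ℝ)) (d c x s : ι → ℝ) : Prop :=
  PrimalFeasible W d x ∧ DualFeasible W c s ∧ ∑ i, x i * s i = 0

/-- The ℓ₂→ℓ₂ operator norm of a matrix. -/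
noncomputable def l2OpNorm {m n : Type*} [Fintype m] [Fintype n] [DecidableEq n]
    (A : Matrix m n ℝ) : ℝ :=
  ‖LinearMap.toContinuousLinearMap (Matrix.toEuclideanLin A)‖

/-- The max-norm (largest absolute value of an entry) of a matrix. -/
noncomputable def matMaxNorm {m n : Type*} [Fintype m] [Fintype n] (A : Matrix m n ℝ) : ℝ :=
  ⨆ i, ⨆ j, |A i j|

set_option linter.unusedSectionVars false

lemma norm2_nonneg (x : ι → ℝ) : 0 ≤ norm2 x := Real.sqrt_nonneg _

lemma norm2_zero' : norm2 (0 : ι → ℝ) = 0 := by simp [norm2]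

lemma norm2_eq_zero {x : ι → ℝ} (h : norm2 x = 0) : x = 0 := by
  have h2 : ∑ i, (x i)^2 = 0 :=
    (Real.sqrt_eq_zero (Finset.sum_nonneg fun i _ => sq_nonneg _)).mp h
  funext i
  have := (Finset.sum_eq_zero_iff_of_nonneg (fun i _ => sq_nonneg (x i))).mp h2 i (Finset.mem_univ i)
  exact pow_eq_zero_iff (by norm_num) |>.mp this

lemma norm2_le_norm2 {a b : ι → ℝ} (h : ∀ i, |a i| ≤ |b i|) : norm2 a ≤ norm2 b := by
  apply Real.sqrt_le_sqrt
  apply Finset.sum_le_sum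
  intro i _
  calc (a i)^2 = |a i|^2 := (sq_abs _).symm
  _ ≤ |b i|^2 := by have := h i; have := abs_nonneg (a i); nlinarith
  _ = (b i)^2 := sq_abs _

lemma norm2_lt_norm2 {a b : ι → ℝ} (h : ∀ i, |a i| ≤ |b i|) (j : ι) (hj : |a j| < |b j|) :
    norm2 a < norm2 b := by
  apply Real.sqrt_lt_sqrt (Finset.sum_nonneg fun i _ => sq_nonneg _)
  apply Finset.sum_lt_sum (fun i _ => by
    calc (a i)^2 = |a i|^2 := (sq_abs _).symm
    _ ≤ |b i|^2 := by have := h i; have := abs_nonneg (a i); nlinarith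
    _ = (b i)^2 := sq_abs _)
  exact ⟨j, Finset.mem_univ j, by
    calc (a j)^2 = |a j|^2 := (sq_abs _).symm
    _ < |b j|^2 := by have := abs_nonneg (a j); nlinarith
    _ = (b j)^2 := sq_abs _⟩

lemma mem_coordSubspace {C : Set ι} {x : ι → ℝ} : x ∈ coordSubspace C ↔ ∀ i ∉ C, x i = 0 :=
  Iff.rfl

lemma eq_smul_of_dim1 {W : Submodule ℝ (ι → ℝ)} {C : Set ι}
    (hC : Module.finrank ℝ ↥(W ⊓ coordSubspace C) = 1) {g z : ι → ℝ}
    (hg : g ∈ W) (hgC : ∀ i ∉ C, g i = 0) (hg0 : g ≠ 0)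
    (hz : z ∈ W) (hzC : ∀ i ∉ C, z i = 0) : ∃ c : ℝ, z = c • g := by
  have hgV : g ∈ W ⊓ coordSubspace C := ⟨hg, hgC⟩
  have hzV : z ∈ W ⊓ coordSubspace C := ⟨hz, hzC⟩
  have hgV0 : (⟨g, hgV⟩ : ↥(W ⊓ coordSubspace C)) ≠ 0 := by
    simp only [ne_eq, Submodule.mk_eq_zero]; exact hg0
  have hspan := (finrank_eq_one_iff_of_nonzero (⟨g, hgV⟩ : ↥(W ⊓ coordSubspace C)) hgV0).mp hC
  have hz' : (⟨z, hzV⟩ : ↥(W ⊓ coordSubspace C)) ∈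
      Submodule.span ℝ {(⟨g, hgV⟩ : ↥(W ⊓ coordSubspace C))} := hspan ▸ Submodule.mem_top
  obtain ⟨c, hc⟩ := Submodule.mem_span_singleton.mp hz'
  refine ⟨c, ?_⟩
  have := congrArg Subtype.val hc
  simpa using this.symm

lemma isCircuit_of_minimal {W : Submodule ℝ (ι → ℝ)} {g : ι → ℝ} (hg : g ∈ W) (hg0 : g ≠ 0)
    (hmin : ∀ h ∈ W, h ≠ 0 → ¬ ({i | h i ≠ 0} ⊂ {i | g i ≠ 0})) :
    IsCircuit W {i | g i ≠ 0} := by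
  set C := {i | g i ≠ 0} with hCdef
  have hgC : ∀ i ∉ C, g i = 0 := fun i hi => by simpa [hCdef] using hi
  -- every vector of W supported in C is a multiple of g
  have key : ∀ z ∈ W, (∀ i ∉ C, z i = 0) → ∃ c : ℝ, z = c • g := by
    intro z hz hzC
    by_cases hz0 : z = 0
    · exact ⟨0, by simp [hz0]⟩
    · obtain ⟨i₀, hi₀⟩ : ∃ i, g i ≠ 0 := by
        by_contra hcon; push_neg at hcon; exact hg0 (funext fun i => hcon i)
      have hi₀C : i₀ ∈ C := hi₀
      set c := z i₀ / g i₀ with hc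
      set w := z - c • g with hw
      have hwW : w ∈ W := W.sub_mem hz (W.smul_mem c hg)
      have hwi₀ : w i₀ = 0 := by
        simp only [hw, hc, Pi.sub_apply, Pi.smul_apply, smul_eq_mul]
        field_simp
        ring
      have hwC : ∀ i ∉ C, w i = 0 := fun i hi => by
        simp [hw, hzC i hi, hgC i hi]
      by_cases hw0 : w = 0
      · refine ⟨c, ?_⟩
        have : z - c • g = 0 := hw0
        linear_combination (norm := skip) this
        funext i; have := congrFun this i; simpa [sub_eq_zero] using this
      · exfalso
        apply hmin w hwW hw0
        constructor
        · intro i hi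
          by_contra hiC
          exact hi (hwC i hiC)
        · intro hsub
          have := hsub hi₀C
          simp only [Set.mem_setOf_eq] at this
          exact this hwi₀
  constructor
  · have hVeq : W ⊓ coordSubspace C = Submodule.span ℝ {g} := by
      apply le_antisymm
      · intro z hz
        obtain ⟨c, hc⟩ := key z hz.1 hz.2
        exact Submodule.mem_span_singleton.mpr ⟨c, hc.symm⟩
      · rw [Submodule.span_singleton_le_iff_mem]
        exact ⟨hg, hgC⟩
    rw [hVeq]
    exact finrank_span_singleton hg0
  · intro C' hC' hrank
    have : Nontrivial ↥(W ⊓ coordSubspace C') := by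
      apply Module.nontrivial_of_finrank_pos (R := ℝ)
      omega
    obtain ⟨z, hz0⟩ := exists_ne (0 : ↥(W ⊓ coordSubspace C'))
    have hzW : (z : ι → ℝ) ∈ W := z.2.1
    have hzC' : ∀ i ∉ C', (z : ι → ℝ) i = 0 := z.2.2
    have hzne : (z : ι → ℝ) ≠ 0 := fun h => hz0 (Subtype.ext h)
    apply hmin z hzW hzne
    apply ssubset_of_subset_of_ssubset _ hC'
    intro i hi
    by_contra hiC'
    exact hi (hzC' i hiC')

lemma sign_trans {a b c : ℝ} (hab : 0 ≤ a * b) (hbc : 0 ≤ b * c) (hb : b ≠ 0) : 0 ≤ a * c := by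
  rcases hb.lt_or_gt with hb' | hb'
  · have ha : a ≤ 0 := by nlinarith
    have hc : c ≤ 0 := by nlinarith
    nlinarith
  · have ha : 0 ≤ a := by nlinarith
    have hc : 0 ≤ c := by nlinarith
    nlinarith

lemma exists_conformal_circuit {W : Submodule ℝ (ι → ℝ)} :
    ∀ k : ℕ, ∀ g : ι → ℝ, {i | g i ≠ 0}.ncard ≤ k → g ∈ W → g ≠ 0 →
    ∃ h, h ∈ W ∧ h ≠ 0 ∧ IsCircuit W {i | h i ≠ 0} ∧
      (∀ i, 0 ≤ g i * h i) ∧ (∀ i, g i = 0 → h i = 0) := by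
  intro k
  induction k with
  | zero =>
    intro g hcard hgW hg0
    exfalso
    obtain ⟨i₀, hi₀⟩ : ∃ i, g i ≠ 0 := by
      by_contra hcon; push_neg at hcon; exact hg0 (funext fun i => hcon i)
    have : 0 < {i | g i ≠ 0}.ncard := by
      rw [Set.ncard_pos (Set.toFinite _)]
      exact ⟨i₀, hi₀⟩
    omega
  | succ k ih =>
    intro g hcard hgW hg0
    by_cases hmin : ∃ h' ∈ W, h' ≠ 0 ∧ {i | h' i ≠ 0} ⊂ {i | g i ≠ 0}
    · obtain ⟨h', hh'W, hh'0, hh'sub⟩ := hmin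
      have hSfin : ({i | h' i ≠ 0}).Finite := Set.toFinite _
      have hSne : hSfin.toFinset.Nonempty := by
        rw [Set.Finite.toFinset_nonempty]
        obtain ⟨a, ha⟩ := Function.ne_iff.mp hh'0
        exact ⟨a, by simpa using ha⟩
      obtain ⟨i₀, hi₀mem, hi₀min⟩ := hSfin.toFinset.exists_min_image (fun i => |g i / h' i|) hSne
      rw [Set.Finite.mem_toFinset] at hi₀mem
      have hh'i₀ : h' i₀ ≠ 0 := hi₀mem
      have hgi₀ : g i₀ ≠ 0 := hh'sub.1 hi₀mem
      set t := g i₀ / h' i₀ with ht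
      set g' := g - t • h' with hg'
      have habs : ∀ i, |g' i - g i| ≤ |g i| := by
        intro i
        by_cases hi : h' i = 0
        · simp [hg', hi]
        · have h1 : |g' i - g i| = |t| * |h' i| := by
            simp only [hg', Pi.sub_apply, Pi.smul_apply, smul_eq_mul]
            rw [show g i - t * h' i - g i = -(t * h' i) by ring, abs_neg, abs_mul]
          rw [h1]
          have h2 : |t| ≤ |g i / h' i| := by
            have := hi₀min i (by rwa [Set.Finite.mem_toFinset])
            simpa [ht] using this
          calc |t| * |h' i| ≤ |g i / h' i| * |h' i| :=
                mul_le_mul_of_nonneg_right h2 (abs_nonneg _)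
          _ = |g i| := by rw [abs_div]; field_simp
      have hsign : ∀ i, 0 ≤ g i * g' i := by
        intro i
        have h1 := habs i
        have h2 : g i * (g i - g' i) ≤ |g i| * |g i - g' i| := by
          calc g i * (g i - g' i) ≤ |g i * (g i - g' i)| := le_abs_self _
          _ = |g i| * |g i - g' i| := abs_mul _ _
        have h3 : |g i - g' i| = |g' i - g i| := abs_sub_comm _ _
        nlinarith [sq_abs (g i), abs_nonneg (g i)]
      have hzero : ∀ i, g i = 0 → g' i = 0 := by
        intro i hi
        have := habs i
        rw [hi] at this
        have h0 : |g' i| ≤ 0 := by simpa using this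
        exact abs_eq_zero.mp (le_antisymm h0 (abs_nonneg _))
      have hg'i₀ : g' i₀ = 0 := by
        simp only [hg', ht, Pi.sub_apply, Pi.smul_apply, smul_eq_mul]
        field_simp
        ring
      have hg'0 : g' ≠ 0 := by
        intro hcon
        have hgt : g = t • h' := by
          funext i
          have := congrFun hcon i
          simp only [hg', Pi.sub_apply, Pi.zero_apply, sub_eq_zero] at this
          simpa using this
        apply hh'sub.2
        intro i hi
        simp only [Set.mem_setOf_eq] at hi ⊢
        intro hcon2
        apply hi
        rw [hgt]
        simp [hcon2]
      have hsub : {i | g' i ≠ 0} ⊂ {i | g i ≠ 0} := by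
        constructor
        · intro i hi
          simp only [Set.mem_setOf_eq] at hi ⊢
          intro hcon; exact hi (hzero i hcon)
        · intro hsub'
          exact (hsub' hgi₀ : g' i₀ ≠ 0) hg'i₀
      have hcard' : {i | g' i ≠ 0}.ncard ≤ k := by
        have := Set.ncard_lt_ncard hsub (Set.toFinite _)
        omega
      have hg'W : g' ∈ W := W.sub_mem hgW (W.smul_mem t hh'W)
      obtain ⟨h, hhW, hh0, hhcirc, hhsign, hhzero⟩ := ih g' hcard' hg'W hg'0
      refine ⟨h, hhW, hh0, hhcirc, ?_, ?_⟩
      · intro i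
        by_cases hhi : h i = 0
        · simp [hhi]
        · have hg'i : g' i ≠ 0 := fun hcon => hhi (hhzero i hcon)
          exact sign_trans (hsign i) (hhsign i) hg'i
      · intro i hi
        exact hhzero i (hzero i hi)
    · push_neg at hmin
      exact ⟨g, hgW, hg0, isCircuit_of_minimal hgW hg0 hmin,
        fun i => mul_self_nonneg _, fun i hi => hi⟩

lemma abs_sub_eq_of_sign {a b : ℝ} (hab : 0 ≤ a * b) (h : |b| ≤ |a|) : |a - b| = |a| - |b| := by
  rcases le_or_gt 0 a with ha | ha
  · rcases eq_or_lt_of_le ha with ha' | ha'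
    · have hb : b = 0 := by
        have : |b| ≤ 0 := by rwa [← ha', abs_zero] at h
        exact abs_eq_zero.mp (le_antisymm this (abs_nonneg _))
      simp [← ha', hb]
    · have hb : 0 ≤ b := by nlinarith
      rw [abs_of_nonneg ha, abs_of_nonneg hb] at *
      rw [abs_of_nonneg (by linarith)]
  · have hb : b ≤ 0 := by nlinarith
    rw [abs_of_neg ha, abs_of_nonpos hb] at *
    rw [abs_of_nonpos (by linarith)]
    ring

lemma list_sum_apply (L : List (ι → ℝ)) (i : ι) : L.sum i = (L.map (fun f => f i)).sum := by
  induction L with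
  | nil => simp
  | cons h t iht => simp [iht]

lemma list_abs_sum_le (L : List ℝ) : |L.sum| ≤ (L.map abs).sum := by
  induction L with
  | nil => simp
  | cons h t iht =>
    simp only [List.sum_cons, List.map_cons]
    exact (abs_add_le _ _).trans (by linarith)

lemma list_sum_finset_sum (L : List (ι → ℝ)) (I : Finset ι) (f : (ι → ℝ) → ι → ℝ) :
    (L.map (fun h => ∑ i ∈ I, f h i)).sum = ∑ i ∈ I, (L.map (fun h => f h i)).sum := by
  induction L with
  | nil => simp
  | cons h t iht => simp [iht, Finset.sum_add_distrib]

lemma decomp {W : Submodule ℝ (ι → ℝ)} :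
    ∀ k : ℕ, ∀ z : ι → ℝ, {i | z i ≠ 0}.ncard ≤ k → z ∈ W →
    ∃ L : List (ι → ℝ), z = L.sum ∧
      (∀ h ∈ L, h ∈ W ∧ h ≠ 0 ∧ IsCircuit W {i | h i ≠ 0}) ∧
      ∀ i, (L.map (fun h => |h i|)).sum = |z i| := by
  intro k
  induction k with
  | zero =>
    intro z hcard hzW
    have hz0 : z = 0 := by
      funext i
      by_contra hi
      have : 0 < {i | z i ≠ 0}.ncard := by
        rw [Set.ncard_pos (Set.toFinite _)]
        exact ⟨i, hi⟩
      omega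
    exact ⟨[], by simp [hz0]⟩
  | succ k ih =>
    intro z hcard hzW
    by_cases hz0 : z = 0
    · exact ⟨[], by simp [hz0]⟩
    · obtain ⟨h₀, hh₀W, hh₀0, hh₀circ, hh₀sign, hh₀zero⟩ :=
        exists_conformal_circuit (k+1) z hcard hzW hz0
      have hSfin : ({i | h₀ i ≠ 0}).Finite := Set.toFinite _
      have hSne : hSfin.toFinset.Nonempty := by
        rw [Set.Finite.toFinset_nonempty]
        obtain ⟨a, ha⟩ := Function.ne_iff.mp hh₀0
        exact ⟨a, by simpa using ha⟩
      obtain ⟨i₀, hi₀mem, hi₀min⟩ :=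
        hSfin.toFinset.exists_min_image (fun i => |z i| / |h₀ i|) hSne
      rw [Set.Finite.mem_toFinset] at hi₀mem
      have hh₀i₀ : h₀ i₀ ≠ 0 := hi₀mem
      have hzi₀ : z i₀ ≠ 0 := fun hcon => hh₀i₀ (hh₀zero i₀ hcon)
      set t := z i₀ / h₀ i₀ with ht
      have htpos : 0 < t := by
        have h1 : 0 < z i₀ * h₀ i₀ :=
          lt_of_le_of_ne (hh₀sign i₀) (by simp [mul_ne_zero hzi₀ hh₀i₀, ne_comm, eq_comm])
        have h2 : t = (z i₀ * h₀ i₀) / (h₀ i₀)^2 := by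
          rw [ht, div_eq_div_iff hh₀i₀ (pow_ne_zero 2 hh₀i₀)]; ring
        rw [h2]
        positivity
      set h := t • h₀ with hhdef
      set z' := z - h with hz'def
      have key : ∀ i, |h i| + |z' i| = |z i| := by
        intro i
        by_cases hi : h₀ i = 0
        · simp [hhdef, hz'def, hi]
        · have hzi : z i ≠ 0 := fun hcon => hi (hh₀zero i hcon)
          have hsign_i : 0 ≤ z i * h i := by
            simp only [hhdef, Pi.smul_apply, smul_eq_mul]
            calc (0:ℝ) ≤ t * (z i * h₀ i) := mul_nonneg htpos.le (hh₀sign i)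
            _ = z i * (t * h₀ i) := by ring
          have hbound : |h i| ≤ |z i| := by
            have h1 : |t| ≤ |z i| / |h₀ i| := by
              have := hi₀min i (by rwa [Set.Finite.mem_toFinset])
              rw [abs_of_pos htpos]
              calc t = |z i₀| / |h₀ i₀| := by
                    rw [ht, ← abs_div, abs_of_pos]; rwa [← ht]
              _ ≤ |z i| / |h₀ i| := this
            simp only [hhdef, Pi.smul_apply, smul_eq_mul, abs_mul]
            calc |t| * |h₀ i| ≤ (|z i| / |h₀ i|) * |h₀ i| :=
                  mul_le_mul_of_nonneg_right h1 (abs_nonneg _)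
            _ = |z i| := by field_simp
          have : |z i - h i| = |z i| - |h i| := abs_sub_eq_of_sign hsign_i hbound
          simp only [hz'def, Pi.sub_apply]
          rw [this]; ring
      have hz'i₀ : z' i₀ = 0 := by
        simp only [hz'def, hhdef, ht, Pi.sub_apply, Pi.smul_apply, smul_eq_mul]
        field_simp
        ring
      have hz'sub : {i | z' i ≠ 0} ⊂ {i | z i ≠ 0} := by
        constructor
        · intro i hi
          simp only [Set.mem_setOf_eq] at hi ⊢
          intro hcon
          apply hi
          have := key i
          rw [hcon, abs_zero] at this
          have h1 : |z' i| ≤ 0 := by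
            have := abs_nonneg (h i); linarith
          exact abs_eq_zero.mp (le_antisymm h1 (abs_nonneg _))
        · intro hsub'
          exact (hsub' hzi₀ : z' i₀ ≠ 0) hz'i₀
      have hcard' : {i | z' i ≠ 0}.ncard ≤ k := by
        have := Set.ncard_lt_ncard hz'sub (Set.toFinite _)
        omega
      have hhW : h ∈ W := W.smul_mem t hh₀W
      have hz'W : z' ∈ W := W.sub_mem hzW hhW
      obtain ⟨L', hL'sum, hL'mem, hL'abs⟩ := ih z' hcard' hz'W
      refine ⟨h :: L', ?_, ?_, ?_⟩
      · simp only [List.sum_cons, ← hL'sum, hz'def]; abel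
      · intro f hf
        rcases List.mem_cons.mp hf with hf | hf
        · subst hf
          refine ⟨hhW, ?_, ?_⟩
          · intro hcon
            apply hh₀0
            funext i
            have := congrFun hcon i
            simp only [hhdef, Pi.smul_apply, smul_eq_mul, Pi.zero_apply] at this
            have := mul_eq_zero.mp this
            rcases this with h' | h'
            · exact absurd h' htpos.ne'
            · simpa using h'
          · have heq : {i | h i ≠ 0} = {i | h₀ i ≠ 0} := by
              ext i
              simp only [Set.mem_setOf_eq, hhdef, Pi.smul_apply, smul_eq_mul,
                mul_ne_zero_iff]
              exact ⟨fun h' => h'.2, fun h' => ⟨htpos.ne', h'⟩⟩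
            rw [heq]
            exact hh₀circ
        · exact hL'mem f hf
      · intro i
        simp only [List.map_cons, List.sum_cons, hL'abs i]
        exact key i

def kappaSet (W : Submodule ℝ (ι → ℝ)) : Set ℝ :=
  {1} ∪ {r | ∃ C : Set ι, IsCircuit W C ∧ ∃ g ∈ W, g ≠ 0 ∧ {i | g i ≠ 0} = C ∧
    r = sSup ((fun i => |g i|) '' C) / sInf ((fun i => |g i|) '' C)}

lemma kappa_eq_sSup (W : Submodule ℝ (ι → ℝ)) : kappa W = sSup (kappaSet W) := rfl

lemma csSup_mul_left {s : Set ℝ} (hne : s.Nonempty) (hfin : s.Finite) {c : ℝ} (hc : 0 ≤ c) :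
    sSup ((fun x => c * x) '' s) = c * sSup s := by
  apply IsGreatest.csSup_eq
  constructor
  · exact ⟨sSup s, hne.csSup_mem hfin, rfl⟩
  · rintro y ⟨x, hx, rfl⟩
    exact mul_le_mul_of_nonneg_left (le_csSup hfin.bddAbove hx) hc

lemma csInf_mul_left {s : Set ℝ} (hne : s.Nonempty) (hfin : s.Finite) {c : ℝ} (hc : 0 ≤ c) :
    sInf ((fun x => c * x) '' s) = c * sInf s := by
  apply IsLeast.csInf_eq
  constructor
  · exact ⟨sInf s, hne.csInf_mem hfin, rfl⟩
  · rintro y ⟨x, hx, rfl⟩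
    exact mul_le_mul_of_nonneg_left (csInf_le hfin.bddBelow hx) hc

lemma ratio_eq {W : Submodule ℝ (ι → ℝ)} {C : Set ι}
    (hdim : Module.finrank ℝ ↥(W ⊓ coordSubspace C) = 1) {g g' : ι → ℝ}
    (hg : g ∈ W) (hgs : {i | g i ≠ 0} = C) (hg0 : g ≠ 0)
    (hg' : g' ∈ W) (hgs' : {i | g' i ≠ 0} = C) (hg'0 : g' ≠ 0) :
    sSup ((fun i => |g' i|) '' C) / sInf ((fun i => |g' i|) '' C) =
    sSup ((fun i => |g i|) '' C) / sInf ((fun i => |g i|) '' C) := by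
  have hgC : ∀ i ∉ C, g i = 0 := fun i hi => by
    by_contra hcon; exact hi (hgs ▸ hcon)
  have hg'C : ∀ i ∉ C, g' i = 0 := fun i hi => by
    by_contra hcon; exact hi (hgs' ▸ hcon)
  obtain ⟨c, hc⟩ := eq_smul_of_dim1 hdim hg hgC hg0 hg' hg'C
  have hc0 : c ≠ 0 := by
    rintro rfl; exact hg'0 (by simp [hc])
  have habs : (fun i => |g' i|) = fun i => |c| * |g i| := by
    funext i; rw [hc]; simp [abs_mul]
  have hCne : C.Nonempty := by
    obtain ⟨a, ha⟩ := Function.ne_iff.mp hg0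
    exact ⟨a, hgs ▸ (by simpa using ha)⟩
  have himgne : ((fun i => |g i|) '' C).Nonempty := hCne.image _
  have himgfin : ((fun i => |g i|) '' C).Finite := (Set.toFinite C).image _
  have himg : (fun i => |g' i|) '' C = (fun x => |c| * x) '' ((fun i => |g i|) '' C) := by
    rw [habs, Set.image_image]
  rw [himg, csSup_mul_left himgne himgfin (abs_nonneg c),
    csInf_mul_left himgne himgfin (abs_nonneg c),
    mul_div_mul_left _ _ (abs_ne_zero.mpr hc0)]

lemma kappaSet_finite (W : Submodule ℝ (ι → ℝ)) : (kappaSet W).Finite := by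
  classical
  set F : Set ι → ℝ := fun C => sSup {r | ∃ g ∈ W, g ≠ 0 ∧ {i | g i ≠ 0} = C ∧
    r = sSup ((fun i => |g i|) '' C) / sInf ((fun i => |g i|) '' C)} with hF
  apply Set.Finite.subset ((Set.finite_range F).insert 1)
  rintro r (h1 | ⟨C, hC, g, hg, hg0, hgs, hr⟩)
  · exact Set.mem_insert_iff.mpr (Or.inl h1)
  · refine Set.mem_insert_iff.mpr (Or.inr ⟨C, ?_⟩)
    have hset : {r' | ∃ g' ∈ W, g' ≠ 0 ∧ {i | g' i ≠ 0} = C ∧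
        r' = sSup ((fun i => |g' i|) '' C) / sInf ((fun i => |g' i|) '' C)} = {r} := by
      ext r'
      simp only [Set.mem_setOf_eq, Set.mem_singleton_iff]
      constructor
      · rintro ⟨g', hg'W, hg'0, hgs', rfl⟩
        rw [hr]
        exact ratio_eq hC.1 hg hgs hg0 hg'W hgs' hg'0
      · rintro rfl
        exact ⟨g, hg, hg0, hgs, hr⟩
    rw [hF]
    simp only
    rw [hset, csSup_singleton]

lemma kappaSet_bddAbove (W : Submodule ℝ (ι → ℝ)) : BddAbove (kappaSet W) :=
  (kappaSet_finite W).bddAbove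

lemma one_le_kappa (W : Submodule ℝ (ι → ℝ)) : 1 ≤ kappa W :=
  le_csSup (kappaSet_bddAbove W) (Or.inl rfl)

lemma le_kappa_of_mem {W : Submodule ℝ (ι → ℝ)} {r : ℝ} (h : r ∈ kappaSet W) : r ≤ kappa W :=
  le_csSup (kappaSet_bddAbove W) h

lemma abs_le_kappa_mul {W : Submodule ℝ (ι → ℝ)} {h : ι → ℝ}
    (hhW : h ∈ W) (hh0 : h ≠ 0) (hcirc : IsCircuit W {i | h i ≠ 0})
    {i : ι} (hi : h i ≠ 0) (j : ι) : |h j| ≤ kappa W * |h i| := by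
  set C := {i | h i ≠ 0} with hC
  set img := (fun i => |h i|) '' C with himg
  have himgne : img.Nonempty := ⟨|h i|, ⟨i, hi, rfl⟩⟩
  have himgfin : img.Finite := (Set.toFinite C).image _
  have hkpos : (0:ℝ) ≤ kappa W := le_trans zero_le_one (one_le_kappa W)
  by_cases hj : h j = 0
  · rw [hj, abs_zero]
    exact mul_nonneg hkpos (abs_nonneg _)
  · have hr : sSup img / sInf img ∈ kappaSet W :=
      Or.inr ⟨C, hcirc, h, hhW, hh0, rfl, rfl⟩
    have hrk := le_kappa_of_mem hr
    have hminf : sInf img ∈ img := himgne.csInf_mem himgfin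
    obtain ⟨a, haC, ham⟩ := hminf
    have hmpos : 0 < sInf img := by
      rw [← ham]
      exact abs_pos.mpr haC
    have hM : |h j| ≤ sSup img := le_csSup himgfin.bddAbove ⟨j, hj, rfl⟩
    have hmle : sInf img ≤ |h i| := csInf_le himgfin.bddBelow ⟨i, hi, rfl⟩
    calc |h j| ≤ sSup img := hM
    _ = (sSup img / sInf img) * sInf img := by field_simp
    _ ≤ kappa W * |h i| := by
        apply mul_le_mul hrk hmle hmpos.le hkpos

lemma list_sum_const_mul {α : Type*} (L : List α) (f : α → ℝ) (c : ℝ) :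
    (L.map (fun a => c * f a)).sum = c * (L.map f).sum := by
  induction L with
  | nil => simp
  | cons h t iht => simp [iht]; ring

def liftSet (W : Submodule ℝ (ι → ℝ)) (I : Finset ι) : Set ℝ :=
  {r | ∃ p z, IsMinLift W I p z ∧ r = norm2 z / Real.sqrt (∑ i ∈ I, (p i) ^ 2)}

lemma liftOpNorm_eq (W : Submodule ℝ (ι → ℝ)) (I : Finset ι) :
    liftOpNorm W I = sSup (liftSet W I) := rfl

lemma zero_mem_liftSet (W : Submodule ℝ (ι → ℝ)) (I : Finset ι) : (0:ℝ) ∈ liftSet W I := by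
  refine ⟨0, 0, ⟨W.zero_mem, fun i _ => rfl, fun z' _ _ => ?_⟩, by simp [norm2]⟩
  rw [norm2_zero']
  exact norm2_nonneg z'

lemma liftSet_le {W : Submodule ℝ (ι → ℝ)} {I : Finset ι} {r : ℝ} (hr : r ∈ liftSet W I) :
    r ≤ (Fintype.card ι : ℝ) * kappa W := by
  obtain ⟨p, z, ⟨hzW, hzp, hzmin⟩, hreq⟩ := hr
  have hk0 : (0:ℝ) ≤ kappa W := le_trans zero_le_one (one_le_kappa W)
  have hrhs : (0:ℝ) ≤ (Fintype.card ι : ℝ) * kappa W :=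
    mul_nonneg (Nat.cast_nonneg _) hk0
  by_cases hz0 : z = 0
  · rw [hreq, hz0, norm2_zero', zero_div]; exact hrhs
  have hQ0 : 0 ≤ ∑ i ∈ I, (p i)^2 := Finset.sum_nonneg fun i _ => sq_nonneg _
  have hQpos : 0 < ∑ i ∈ I, (p i)^2 := by
    rcases hQ0.lt_or_eq with h | h
    · exact h
    · exfalso
      have hpz : ∀ i ∈ I, p i = 0 := by
        intro i hi
        have := (Finset.sum_eq_zero_iff_of_nonneg (fun i _ => sq_nonneg (p i))).mp h.symm i hi
        exact pow_eq_zero_iff (by norm_num) |>.mp this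
      have := hzmin 0 W.zero_mem (fun i hi => ((hpz i hi).symm : (0:ι→ℝ) i = p i))
      rw [norm2_zero'] at this
      exact hz0 (norm2_eq_zero (le_antisymm this (norm2_nonneg z)))
  obtain ⟨L, hLsum, hLmem, hLabs⟩ := decomp (Fintype.card ι) z
    (by
      have := Set.ncard_le_ncard (Set.subset_univ {i | z i ≠ 0}) (Set.toFinite _)
      simpa [Set.ncard_univ] using this) hzW
  -- every circuit in the decomposition meets I
  have hmeet : ∀ h ∈ L, ∃ i ∈ I, h i ≠ 0 := by
    intro h hh
    by_contra hcon
    push_neg at hcon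
    obtain ⟨hhW, hh0, _⟩ := hLmem h hh
    have hperm : List.Perm L (h :: L.erase h) := List.perm_cons_erase hh
    have habs : ∀ i, |z i - h i| ≤ |z i| - |h i| := by
      intro i
      have h1 : (L.map (fun f => |f i|)).sum = |z i| := hLabs i
      have h2 : (L.map fun f => |f i|).sum = |h i| + ((L.erase h).map fun f => |f i|).sum := by
        have := (hperm.map (fun f => |f i|)).sum_eq
        simpa using this
      have h3 : z i - h i = ((L.erase h).map (fun f => f i)).sum := by
        have hzi : z i = (L.map (fun f => f i)).sum := by rw [hLsum, list_sum_apply]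
        have hp := (hperm.map (fun f => f i)).sum_eq
        simp only [List.map_cons, List.sum_cons] at hp
        rw [hzi, hp]; ring
      rw [h3]
      calc |((L.erase h).map (fun f => f i)).sum|
          ≤ (((L.erase h).map (fun f => f i)).map abs).sum := list_abs_sum_le _
      _ = ((L.erase h).map (fun f => |f i|)).sum := by rw [List.map_map]; rfl
      _ = |z i| - |h i| := by linarith [h1, h2]
    obtain ⟨i₁, hi₁⟩ := Function.ne_iff.mp hh0
    have hi₁' : h i₁ ≠ 0 := by simpa using hi₁
    have hlt : norm2 (z - h) < norm2 z := by
      apply norm2_lt_norm2 (fun i => ?_) i₁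
      · show |(z - h) i₁| < |z i₁|
        rw [Pi.sub_apply]
        have := habs i₁
        have := abs_pos.mpr hi₁'
        linarith
      · show |(z - h) i| ≤ |z i|
        rw [Pi.sub_apply]
        have := habs i
        have := abs_nonneg (h i)
        linarith
    have := hzmin (z - h) (W.sub_mem hzW hhW)
      (fun i hi => by rw [Pi.sub_apply, hcon i hi, sub_zero]; exact hzp i hi)
    linarith
  -- coordinate bound
  have hcoord : ∀ j, |z j| ≤ kappa W * ∑ i ∈ I, |p i| := by
    intro j
    have h2 : ∀ h ∈ L, |h j| ≤ kappa W * ∑ i ∈ I, |h i| := by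
      intro h hh
      obtain ⟨hhW, hh0, hhc⟩ := hLmem h hh
      obtain ⟨i, hiI, hi0⟩ := hmeet h hh
      calc |h j| ≤ kappa W * |h i| := abs_le_kappa_mul hhW hh0 hhc hi0 j
      _ ≤ kappa W * ∑ i' ∈ I, |h i'| :=
          mul_le_mul_of_nonneg_left
            (Finset.single_le_sum (f := fun i' => |h i'|) (fun i' _ => abs_nonneg _) hiI) hk0
    calc |z j| = (L.map (fun h => |h j|)).sum := (hLabs j).symm
    _ ≤ (L.map (fun h => kappa W * ∑ i ∈ I, |h i|)).sum :=
        List.sum_le_sum (l := L) (f := fun h => |h j|)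
          (g := fun h => kappa W * ∑ i ∈ I, |h i|) h2
    _ = kappa W * (L.map (fun h => ∑ i ∈ I, |h i|)).sum := list_sum_const_mul L _ _
    _ = kappa W * ∑ i ∈ I, (L.map (fun h => |h i|)).sum := by rw [list_sum_finset_sum]
    _ = kappa W * ∑ i ∈ I, |z i| := by
        congr 1
        exact Finset.sum_congr rfl fun i _ => hLabs i
    _ = kappa W * ∑ i ∈ I, |p i| := by
        congr 1
        exact Finset.sum_congr rfl fun i hi => by rw [hzp i hi]
  obtain ⟨i₂, hi₂⟩ := Function.ne_iff.mp hz0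
  set B := kappa W * ∑ i ∈ I, |p i| with hB
  have hB0 : 0 ≤ B := le_trans (abs_nonneg (z i₂)) (hcoord i₂)
  set nn := (Fintype.card ι : ℝ) with hnn
  have hnn0 : (0:ℝ) ≤ nn := Nat.cast_nonneg _
  have hnorm : norm2 z ≤ Real.sqrt nn * B := by
    have h1 : ∑ j, (z j)^2 ≤ nn * B^2 := by
      have := Finset.sum_le_card_nsmul Finset.univ (fun j => (z j)^2) (B^2)
        (fun j _ => by
          have h' := hcoord j
          calc (z j)^2 = |z j|^2 := (sq_abs _).symm
          _ ≤ B^2 := by nlinarith [abs_nonneg (z j)])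
      simpa [nsmul_eq_mul, hnn] using this
    calc norm2 z ≤ Real.sqrt (nn * B^2) := Real.sqrt_le_sqrt h1
    _ = Real.sqrt nn * B := by
        rw [Real.sqrt_mul hnn0, Real.sqrt_sq hB0]
  have hl1 : ∑ i ∈ I, |p i| ≤ Real.sqrt nn * Real.sqrt (∑ i ∈ I, (p i)^2) := by
    have h1 : (∑ i ∈ I, |p i|)^2 ≤ (I.card : ℝ) * ∑ i ∈ I, (p i)^2 := by
      have := sq_sum_le_card_mul_sum_sq (s := I) (f := fun i => |p i|)
      simpa [sq_abs] using this
    have h2 : (I.card : ℝ) ≤ nn := by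
      rw [hnn]
      exact_mod_cast Finset.card_le_univ I
    have h3 : (∑ i ∈ I, |p i|)^2 ≤ nn * ∑ i ∈ I, (p i)^2 := by nlinarith
    have h4 : 0 ≤ ∑ i ∈ I, |p i| := Finset.sum_nonneg fun i _ => abs_nonneg _
    calc ∑ i ∈ I, |p i| ≤ Real.sqrt (nn * ∑ i ∈ I, (p i)^2) :=
          (Real.le_sqrt h4 (by positivity)).mpr h3
    _ = Real.sqrt nn * Real.sqrt (∑ i ∈ I, (p i)^2) := Real.sqrt_mul hnn0 _
  rw [hreq, div_le_iff₀ (Real.sqrt_pos.mpr hQpos)]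
  have hs0 : 0 ≤ Real.sqrt nn := Real.sqrt_nonneg _
  have hss : Real.sqrt nn * Real.sqrt nn = nn := Real.mul_self_sqrt hnn0
  calc norm2 z ≤ Real.sqrt nn * B := hnorm
  _ = Real.sqrt nn * kappa W * ∑ i ∈ I, |p i| := by rw [hB]; ring
  _ ≤ Real.sqrt nn * kappa W * (Real.sqrt nn * Real.sqrt (∑ i ∈ I, (p i)^2)) := by
      apply mul_le_mul_of_nonneg_left hl1 (mul_nonneg hs0 hk0)
  _ = Real.sqrt nn * Real.sqrt nn * kappa W * Real.sqrt (∑ i ∈ I, (p i)^2) := by ring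
  _ = nn * kappa W * Real.sqrt (∑ i ∈ I, (p i)^2) := by rw [hss]

lemma liftSet_bddAbove (W : Submodule ℝ (ι → ℝ)) (I : Finset ι) : BddAbove (liftSet W I) :=
  ⟨(Fintype.card ι : ℝ) * kappa W, fun _ hr => liftSet_le hr⟩

lemma liftOpNorm_le (W : Submodule ℝ (ι → ℝ)) (I : Finset ι) :
    liftOpNorm W I ≤ (Fintype.card ι : ℝ) * kappa W :=
  csSup_le ⟨0, zero_mem_liftSet W I⟩ fun _ hr => liftSet_le hr

def chiSet (W : Submodule ℝ (ι → ℝ)) : Set ℝ :=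
  {r | ∃ I : Finset ι, I.Nonempty ∧ r = liftOpNorm W I}

lemma chiBar_eq (W : Submodule ℝ (ι → ℝ)) : chiBar W = sSup (chiSet W) := rfl

lemma chiSet_bddAbove (W : Submodule ℝ (ι → ℝ)) : BddAbove (chiSet W) :=
  ⟨(Fintype.card ι : ℝ) * kappa W, by rintro r ⟨I, _, rfl⟩; exact liftOpNorm_le W I⟩

lemma chiBar_le [Nonempty ι] (W : Submodule ℝ (ι → ℝ)) :
    chiBar W ≤ (Fintype.card ι : ℝ) * kappa W :=
  csSup_le ⟨liftOpNorm W Finset.univ, ⟨Finset.univ, Finset.univ_nonempty, rfl⟩⟩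
    (by rintro r ⟨I, _, rfl⟩; exact liftOpNorm_le W I)

lemma ratio_facts {W : Submodule ℝ (ι → ℝ)}
    (hnoloop : ∀ C : Set ι, IsCircuit W C → 2 ≤ C.ncard)
    {g : ι → ℝ} (hgW : g ∈ W) (hg0 : g ≠ 0) (hcirc : IsCircuit W {i | g i ≠ 0}) :
    1 ≤ sSup ((fun i => |g i|) '' {i | g i ≠ 0}) / sInf ((fun i => |g i|) '' {i | g i ≠ 0}) ∧
    Real.sqrt ((sSup ((fun i => |g i|) '' {i | g i ≠ 0}) /
      sInf ((fun i => |g i|) '' {i | g i ≠ 0}))^2 + 1) ≤ chiBar W := by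
  classical
  set C := {i | g i ≠ 0} with hCdef
  set img := (fun i => |g i|) '' C with himg
  have hCne : C.Nonempty := by
    obtain ⟨a, ha⟩ := Function.ne_iff.mp hg0
    exact ⟨a, by simpa [hCdef] using ha⟩
  have himgne : img.Nonempty := hCne.image _
  have himgfin : img.Finite := (Set.toFinite C).image _
  set m := sInf img with hm
  set M := sSup img with hM
  obtain ⟨j, hjC, hjm0⟩ := himgne.csInf_mem himgfin
  obtain ⟨i₁, hi₁C, hi₁M0⟩ := himgne.csSup_mem himgfin
  have hjm : |g j| = m := by simpa [hm] using hjm0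
  have hi₁M : |g i₁| = M := by simpa [hM] using hi₁M0
  have hgj : g j ≠ 0 := hjC
  have hmpos : 0 < m := by rw [← hjm]; exact abs_pos.mpr hgj
  have hmM : m ≤ M := csInf_le_csSup himgne himgfin.bddBelow himgfin.bddAbove
  have hr1 : 1 ≤ M / m := (one_le_div hmpos).mpr hmM
  -- second index with M^2 ≤ (g i₂)^2 and i₂ ≠ j
  obtain ⟨i₂, hi₂ne, hi₂sq⟩ : ∃ i₂, i₂ ≠ j ∧ M^2 ≤ (g i₂)^2 := by
    by_cases hij : i₁ = j
    · have hMm : M = m := by rw [← hi₁M, ← hjm, hij]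
      have hcard := hnoloop C hcirc
      obtain ⟨i₂, hi₂C, hi₂ne⟩ := Set.exists_ne_of_one_lt_ncard
        (show 1 < C.ncard by omega) j
      refine ⟨i₂, hi₂ne, ?_⟩
      have h1 : m ≤ |g i₂| := csInf_le himgfin.bddBelow ⟨i₂, hi₂C, rfl⟩
      rw [hMm]
      calc m^2 ≤ |g i₂|^2 := by nlinarith
      _ = (g i₂)^2 := sq_abs _
    · refine ⟨i₁, hij, ?_⟩
      rw [← hi₁M, sq_abs]
  have hsum : M^2 + m^2 ≤ ∑ i, (g i)^2 := by
    have h1 : ∑ i ∈ ({i₂, j} : Finset ι), (g i)^2 ≤ ∑ i, (g i)^2 :=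
      Finset.sum_le_sum_of_subset_of_nonneg (Finset.subset_univ _)
        (fun i _ _ => sq_nonneg _)
    rw [Finset.sum_pair hi₂ne] at h1
    have h2 : (g j)^2 = m^2 := by rw [← sq_abs, hjm]
    linarith
  -- the index set I
  set I : Finset ι := insert j (Finset.univ.filter (fun i => g i = 0)) with hI
  have hjI : j ∈ I := Finset.mem_insert_self _ _
  have hI_zero : ∀ i ∈ I, i ≠ j → g i = 0 := by
    intro i hi hij
    rcases Finset.mem_insert.mp hi with h | h
    · exact absurd h hij
    · exact (Finset.mem_filter.mp h).2
  have hI_out : ∀ i ∉ C, i ∈ I := by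
    intro i hi
    have : g i = 0 := by simpa [hCdef] using hi
    exact Finset.mem_insert.mpr (Or.inr (Finset.mem_filter.mpr ⟨Finset.mem_univ _, this⟩))
  have hgC : ∀ i ∉ C, g i = 0 := fun i hi => by simpa [hCdef] using hi
  -- min lift
  have hlift : IsMinLift W I g g := by
    refine ⟨hgW, fun i _ => rfl, ?_⟩
    intro z' hz'W hz'I
    have hz'C : ∀ i ∉ C, z' i = 0 := fun i hi => by
      rw [hz'I i (hI_out i hi)]; exact hgC i hi
    obtain ⟨c, hc⟩ := eq_smul_of_dim1 hcirc.1 hgW hgC hg0 hz'W hz'C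
    have hj' : z' j = g j := hz'I j hjI
    rw [hc] at hj'
    simp only [Pi.smul_apply, smul_eq_mul] at hj'
    have hc1 : c = 1 := by
      have h1 : c * g j = 1 * g j := by rw [one_mul]; exact hj'
      exact mul_right_cancel₀ hgj h1
    rw [hc, hc1, one_smul]
  have hQ : ∑ i ∈ I, (g i)^2 = m^2 := by
    rw [Finset.sum_eq_single j (fun b hb hbj => by rw [hI_zero b hb hbj]; ring)
      (fun h => absurd hjI h)]
    rw [← sq_abs, hjm]
  have hr₀mem : norm2 g / Real.sqrt (∑ i ∈ I, (g i)^2) ∈ liftSet W I := ⟨g, g, hlift, rfl⟩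
  have hr₀eq : norm2 g / Real.sqrt (∑ i ∈ I, (g i)^2) = norm2 g / m := by
    rw [hQ, Real.sqrt_sq hmpos.le]
  have hchain : norm2 g / m ≤ chiBar W := by
    calc norm2 g / m = norm2 g / Real.sqrt (∑ i ∈ I, (g i)^2) := hr₀eq.symm
    _ ≤ liftOpNorm W I := le_csSup (liftSet_bddAbove W I) hr₀mem
    _ ≤ chiBar W := le_csSup (chiSet_bddAbove W) ⟨I, ⟨j, hjI⟩, rfl⟩
  refine ⟨hr1, ?_⟩
  have hlow : Real.sqrt ((M/m)^2 + 1) ≤ norm2 g / m := by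
    have h1 : (M/m)^2 + 1 = (M^2 + m^2)/m^2 := by field_simp
    have h2 : (M^2 + m^2)/m^2 ≤ (∑ i, (g i)^2)/m^2 := by gcongr
    rw [h1]
    have h3 := Real.sqrt_le_sqrt h2
    have h4 : Real.sqrt ((∑ i, (g i)^2)/m^2) = Real.sqrt (∑ i, (g i)^2) / m := by
      rw [Real.sqrt_div (Finset.sum_nonneg fun i _ => sq_nonneg _) (m^2),
        Real.sqrt_sq hmpos.le]
    rw [h4] at h3
    calc Real.sqrt ((M^2+m^2)/m^2) ≤ Real.sqrt (∑ i, (g i)^2) / m := h3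
    _ = norm2 g / m := rfl
  calc Real.sqrt ((M/m)^2 + 1) ≤ norm2 g / m := hlow
  _ ≤ chiBar W := hchain


/-- for `W ≠ {0}` without loops, `(1/n)·χ̄_W ≤ κ_W ≤ √(χ̄_W² − 1)`. -/
theorem kappa_chiBar_bounds {n : ℕ} (W : Submodule ℝ (Fin n → ℝ)) (hW : W ≠ ⊥)
    (hnoloop : ∀ C : Set (Fin n), IsCircuit W C → 2 ≤ C.ncard) :
    (1 / (n : ℝ)) * chiBar W ≤ kappa W ∧ kappa W ≤ Real.sqrt (chiBar W ^ 2 - 1) := by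
  classical
  have hn0 : 0 < n := by
    rcases Nat.eq_zero_or_pos n with h0 | h
    · exfalso
      apply hW
      rw [Submodule.eq_bot_iff]
      intro x _
      funext i
      subst h0
      exact i.elim0
    · exact h
  haveI : Nonempty (Fin n) := ⟨⟨0, hn0⟩⟩
  obtain ⟨g₀, hg₀W, hg₀0⟩ := (Submodule.ne_bot_iff W).mp hW
  obtain ⟨h, hhW, hh0, hhcirc, -, -⟩ := exists_conformal_circuit (Fintype.card (Fin n)) g₀
    (by
      have := Set.ncard_le_ncard (Set.subset_univ {i | g₀ i ≠ 0}) (Set.toFinite _)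
      simpa [Set.ncard_univ] using this) hg₀W hg₀0
  obtain ⟨hr1h, hchih⟩ := ratio_facts hnoloop hhW hh0 hhcirc
  have hchi0 : 0 ≤ chiBar W := le_trans (Real.sqrt_nonneg _) hchih
  have sq_le : ∀ X : ℝ, 0 ≤ X → Real.sqrt X ≤ chiBar W → X ≤ chiBar W ^ 2 := by
    intro X hX hle
    nlinarith [Real.sq_sqrt hX, Real.sqrt_nonneg X]
  have hr1h0 : (0:ℝ) ≤ (sSup ((fun i => |h i|) '' {i | h i ≠ 0}) /
      sInf ((fun i => |h i|) '' {i | h i ≠ 0})) := by linarith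
  have hchisq_h := sq_le _ (by positivity) hchih
  constructor
  · have h1 : chiBar W ≤ (n : ℝ) * kappa W := by
      have := chiBar_le (ι := Fin n) W
      simpa [Fintype.card_fin] using this
    have hn : (0:ℝ) < n := by exact_mod_cast hn0
    calc (1/(n:ℝ)) * chiBar W ≤ (1/(n:ℝ)) * ((n:ℝ) * kappa W) :=
        mul_le_mul_of_nonneg_left h1 (by positivity)
    _ = kappa W := by field_simp
  · rw [kappa_eq_sSup]
    have hne : (kappaSet W).Nonempty := ⟨1, Or.inl rfl⟩
    apply csSup_le hne
    rintro s (hs | ⟨C, hC, g, hgW2, hg02, hgs, rfl⟩)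
    · simp only [Set.mem_singleton_iff] at hs
      subst hs
      exact (Real.le_sqrt (by norm_num) (by nlinarith)).mpr (by nlinarith)
    · subst hgs
      obtain ⟨hr1g, hchig⟩ := ratio_facts hnoloop hgW2 hg02 hC
      have hsq := sq_le _ (by positivity) hchig
      have h0 : (0:ℝ) ≤ sSup ((fun i => |g i|) '' {i | g i ≠ 0}) /
          sInf ((fun i => |g i|) '' {i | g i ≠ 0}) := by linarith
      exact (Real.le_sqrt h0 (by nlinarith)).mpr (by nlinarith)
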